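/- Let Z be a real Banach space with a Schauder basis (e_n): every z ∈ Z has a unique representation z = Σ_n a_n e_n (convergence of the partial sums in norm). Assume (e_n) is c_u-unconditional for some c_u ≥ 1, i.e. ‖Σ_n θ_n a_n e_n‖ ≤ c_u ‖Σ_n a_n e_n‖ for all signs θ_n ∈ {−1, 1} and all z = Σ_n a_n e_n ∈ Z. A block basis of (e_n) is a sequence y_n = Σ_{i∈I_n} b_i e_i of nonzero vectors where I₁ < I₂ < ⋯ are finite subsets of ℕ (max I_n < min I_{n+1}); it is normalized if ‖y_n‖ = 1 for all n. Assume there is c_d > 0 such that every normalized block basis (y_n) of (e_n) c_d-dominates (e_n): c_d ‖Σ α_i y_i‖ ≥ ‖Σ α_i e_i‖ for all finitely supported real scalars (α_i). Then for every normalized block basis (y_n) of (e_n) which is equivalent to (e_n) (there is c ≥ 1 with (1/c)‖Σ α_i e_i‖ ≤ ‖Σ α_i y_i‖ ≤ c‖Σ α_i e_i‖ for all finitely supported (α_i)), the closed linear span of (y_n) is complemented in Z, i.e. it is the range of a bounded linear projection on Z. -/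

import Mathlib

def FLt (A B : Finset ℕ) : Prop := ∀ a ∈ A, ∀ b ∈ B, a < b

/-- `y` is a normalized block basis of the basis `e` of `Z`: each `y n` is a nonzero
norm-one vector of the form `∑_{i ∈ I n} b i • e i` with `I₁ < I₂ < ⋯` finite sets. -/
def IsNormalizedBlockBasis {Z : Type*} [NormedAddCommGroup Z] [Module ℝ Z]
    (e y : ℕ → Z) : Prop :=
  (∀ n, y n ≠ 0) ∧ (∀ n, ‖y n‖ = 1) ∧
    ∃ I : ℕ → Finset ℕ, (∀ m n : ℕ, m < n → FLt (I m) (I n)) ∧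
      ∃ b : ℕ → ℝ, ∀ n, y n = ∑ i ∈ I n, b i • e i

private lemma finTendsto {Z : Type*} [NormedAddCommGroup Z]
    (β : ℕ → Z) (S : Finset ℕ) (hβ : ∀ i ∉ S, β i = 0) :
    Filter.Tendsto (fun n => ∑ i ∈ Finset.range n, β i) Filter.atTop
      (nhds (∑ i ∈ S, β i)) := by
  have h : ∀ᶠ n in Filter.atTop, (∑ i ∈ S, β i) = ∑ i ∈ Finset.range n, β i := by
    filter_upwards [Filter.eventually_ge_atTop ((S.sup id) + 1)] with n hn
    refine Finset.sum_subset ?_ ?_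
    · intro i hi
      have : i ≤ S.sup id := Finset.le_sup (f := id) hi
      exact Finset.mem_range.2 (by omega)
    · intro i _ hi; exact hβ i hi
  exact Filter.Tendsto.congr' h tendsto_const_nhds

private lemma multiplier_bound {Z : Type*} [NormedAddCommGroup Z] [NormedSpace ℝ Z]
    (β : ℕ → Z) (C : ℝ) (F : Finset ℕ) :
    ∀ v : Z, (∀ θ : ℕ → ℝ, (∀ n, θ n = 1 ∨ θ n = -1) →
      ‖v + ∑ i ∈ F, θ i • β i‖ ≤ C) →
    ∀ l : ℕ → ℝ, (∀ i, |l i| ≤ 1) → ‖v + ∑ i ∈ F, l i • β i‖ ≤ C := by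
  classical
  induction F using Finset.induction with
  | empty =>
    intro v hs l _
    simpa using hs (fun _ => 1) (fun _ => Or.inl rfl)
  | insert j F hj ih =>
    intro v hs l hl
    have hupd : ∀ (θ : ℕ → ℝ) (s : ℝ),
        ∑ i ∈ insert j F, (Function.update θ j s) i • β i
          = s • β j + ∑ i ∈ F, θ i • β i := by
      intro θ s
      rw [Finset.sum_insert hj, Function.update_self]
      congr 1
      exact Finset.sum_congr rfl (fun i hi => by
        rw [Function.update_of_ne (by rintro rfl; exact hj hi)])
    rw [Finset.sum_insert hj]
    have hl1 : -1 ≤ l j := neg_le_of_abs_le (hl j)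
    have hl2 : l j ≤ 1 := le_of_abs_le (hl j)
    set t : ℝ := (1 + l j) / 2 with ht
    have ht0 : 0 ≤ t := by rw [ht]; linarith
    have ht1 : t ≤ 1 := by rw [ht]; linarith
    have hlj : l j = 2 * t - 1 := by rw [ht]; ring
    have key : v + (l j • β j + ∑ i ∈ F, l i • β i)
        = t • ((v + β j) + ∑ i ∈ F, l i • β i)
          + (1 - t) • ((v - β j) + ∑ i ∈ F, l i • β i) := by
      rw [hlj]; module
    have h1 : ‖(v + β j) + ∑ i ∈ F, l i • β i‖ ≤ C := by
      refine ih (v + β j) ?_ l hl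
      intro θ hθ
      have h := hs (Function.update θ j 1) (by
        intro n
        rcases eq_or_ne n j with rfl | hn
        · simp
        · rw [Function.update_of_ne hn]; exact hθ n)
      rw [hupd] at h
      rw [add_assoc]
      simpa [one_smul] using h
    have h2 : ‖(v - β j) + ∑ i ∈ F, l i • β i‖ ≤ C := by
      refine ih (v - β j) ?_ l hl
      intro θ hθ
      have h := hs (Function.update θ j (-1)) (by
        intro n
        rcases eq_or_ne n j with rfl | hn
        · simp
        · rw [Function.update_of_ne hn]; exact hθ n)
      rw [hupd] at h
      rw [sub_eq_add_neg, add_assoc]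
      simpa [neg_one_smul, sub_eq_add_neg] using h
    rw [key]
    calc ‖t • ((v + β j) + ∑ i ∈ F, l i • β i)
          + (1 - t) • ((v - β j) + ∑ i ∈ F, l i • β i)‖
        ≤ ‖t • ((v + β j) + ∑ i ∈ F, l i • β i)‖
          + ‖(1 - t) • ((v - β j) + ∑ i ∈ F, l i • β i)‖ := norm_add_le _ _
      _ = t * ‖(v + β j) + ∑ i ∈ F, l i • β i‖
          + (1 - t) * ‖(v - β j) + ∑ i ∈ F, l i • β i‖ := by
          rw [norm_smul, norm_smul, Real.norm_of_nonneg ht0,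
            Real.norm_of_nonneg (by linarith)]
      _ ≤ t * C + (1 - t) * C := by
          have := mul_le_mul_of_nonneg_left h1 ht0
          have := mul_le_mul_of_nonneg_left h2 (by linarith : (0:ℝ) ≤ 1 - t)
          linarith
      _ = C := by ring

private lemma exists_finsupp {Z : Type*} [AddCommGroup Z] [Module ℝ Z]
    (F : Finset ℕ) (φ : ℕ → ℝ) :
    ∃ α : ℕ →₀ ℝ, ∀ v : ℕ → Z, (α.sum fun i t => t • v i) = ∑ i ∈ F, φ i • v i := by
  classical
  refine ⟨Finsupp.onFinset F (fun i => if i ∈ F then φ i else 0)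
    (fun a ha => by by_contra h; simp [h] at ha), fun v => ?_⟩
  rw [Finsupp.sum_of_support_subset _ Finsupp.support_onFinset_subset _
    (fun i _ => zero_smul ℝ (v i))]
  exact Finset.sum_congr rfl fun i hi => by simp [Finsupp.onFinset_apply, hi]


/-- Proposition 2.5: in a Banach space `Z` with a `c_u`-unconditional
Schauder basis `(e_n)` in which every normalized block basis `c_d`-dominates `(e_n)`,
the closed linear span of any normalized block basis equivalent to `(e_n)` is
complemented in `Z`. -/
theorem block_basis_span_complemented
    (Z : Type*) [NormedAddCommGroup Z] [NormedSpace ℝ Z] [CompleteSpace Z]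
    (e : ℕ → Z)
    (hbasis : ∀ z : Z, ∃! a : ℕ → ℝ,
      Filter.Tendsto (fun n => ∑ i ∈ Finset.range n, a i • e i) Filter.atTop (nhds z))
    (cu : ℝ) (hcu : 1 ≤ cu)
    (huncond : ∀ (z : Z) (a θ : ℕ → ℝ), (∀ n, θ n = 1 ∨ θ n = -1) →
      Filter.Tendsto (fun n => ∑ i ∈ Finset.range n, a i • e i) Filter.atTop (nhds z) →
      ∃ w : Z,
        Filter.Tendsto (fun n => ∑ i ∈ Finset.range n, (θ i * a i) • e i)
          Filter.atTop (nhds w) ∧ ‖w‖ ≤ cu * ‖z‖)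
    (cd : ℝ) (hcd : 0 < cd)
    (hdom : ∀ u : ℕ → Z, IsNormalizedBlockBasis e u →
      ∀ α : ℕ →₀ ℝ, ‖α.sum fun i t => t • e i‖ ≤ cd * ‖α.sum fun i t => t • u i‖)
    (y : ℕ → Z) (hy : IsNormalizedBlockBasis e y)
    (hequiv : ∃ c : ℝ, 1 ≤ c ∧ ∀ α : ℕ →₀ ℝ,
      (1 / c) * ‖α.sum fun i t => t • e i‖ ≤ ‖α.sum fun i t => t • y i‖ ∧
      ‖α.sum fun i t => t • y i‖ ≤ c * ‖α.sum fun i t => t • e i‖) :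
    ∃ P : Z →L[ℝ] Z, (∀ z : Z, P (P z) = P z) ∧
      LinearMap.range (P : Z →ₗ[ℝ] Z) = (Submodule.span ℝ (Set.range y)).topologicalClosure := by
  classical
  obtain ⟨hyne, hynorm, I, hI, b, hyb⟩ := hy
  obtain ⟨c, hc1, hcequiv⟩ := hequiv
  have hc0 : (0:ℝ) ≤ c := le_trans zero_le_one hc1
  have hcu0 : (0:ℝ) ≤ cu := le_trans zero_le_one hcu
  have hccd : (0:ℝ) ≤ c * cu * cd := mul_nonneg (mul_nonneg hc0 hcu0) hcd.le
  set k : ℝ := (1 + cu) / 2 with hk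
  have hk0 : (0:ℝ) ≤ k := by rw [hk]; linarith
  -- coefficient functionals
  have hcoex : ∀ z : Z, ∃ α : ℕ → ℝ,
      Filter.Tendsto (fun n => ∑ i ∈ Finset.range n, α i • e i) Filter.atTop (nhds z) ∧
      ∀ β : ℕ → ℝ,
        Filter.Tendsto (fun n => ∑ i ∈ Finset.range n, β i • e i) Filter.atTop (nhds z) →
        β = α :=
    fun z => ⟨(hbasis z).choose, (hbasis z).choose_spec.1, (hbasis z).choose_spec.2⟩
  choose co haten hauniq using hcoex
  have haadd : ∀ z w : Z, co (z + w) = fun i => co z i + co w i := by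
    intro z w
    symm
    refine hauniq (z + w) _ ?_
    have h := (haten z).add (haten w)
    refine h.congr fun n => ?_
    rw [← Finset.sum_add_distrib]
    exact Finset.sum_congr rfl fun i _ => (add_smul _ _ _).symm
  have hasmul : ∀ (r : ℝ) (z : Z), co (r • z) = fun i => r * co z i := by
    intro r z
    symm
    refine hauniq (r • z) _ ?_
    have h := (haten z).const_smul r
    refine h.congr fun n => ?_
    rw [Finset.smul_sum]
    exact Finset.sum_congr rfl fun i _ => by rw [smul_smul]
  -- coordinate projections onto sets of indices
  have hQex : ∀ (A : Set ℕ) (z : Z), ∃ w : Z,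
      Filter.Tendsto (fun n => ∑ i ∈ Finset.range n, (A.indicator (co z) i) • e i)
        Filter.atTop (nhds w) ∧ ‖w‖ ≤ k * ‖z‖ := by
    intro A z
    obtain ⟨w, hw, hwn⟩ := huncond z (co z) (fun i => if i ∈ A then 1 else -1)
      (fun i => by by_cases h : i ∈ A <;> simp [h]) (haten z)
    refine ⟨(2:ℝ)⁻¹ • (z + w), ?_, ?_⟩
    · have h := ((haten z).add hw).const_smul ((2:ℝ)⁻¹)
      refine h.congr fun n => ?_
      rw [← Finset.sum_add_distrib, Finset.smul_sum]
      refine Finset.sum_congr rfl fun i _ => ?_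
      by_cases h : i ∈ A
      · rw [if_pos h, Set.indicator_of_mem h, one_mul, ← add_smul, smul_smul]
        congr 1; ring
      · rw [if_neg h, Set.indicator_of_notMem h, neg_one_mul, ← add_smul, smul_smul]
        have : (2:ℝ)⁻¹ * (co z i + -co z i) = 0 := by ring
        rw [this, zero_smul]
    · calc ‖(2:ℝ)⁻¹ • (z + w)‖ = 2⁻¹ * ‖z + w‖ := by
            rw [norm_smul, Real.norm_of_nonneg (by norm_num)]
        _ ≤ 2⁻¹ * (‖z‖ + cu * ‖z‖) := by
            have := norm_add_le z w
            nlinarith [norm_nonneg z, norm_nonneg w]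
        _ = k * ‖z‖ := by rw [hk]; ring
  choose Q hQt hQn using hQex
  -- coefficients of finite sums
  have hacoef : ∀ (S : Finset ℕ) (α : ℕ → ℝ),
      co (∑ i ∈ S, α i • e i) = fun i => if i ∈ S then α i else 0 := by
    intro S α
    symm
    refine hauniq _ _ ?_
    have h1 := finTendsto (fun i => (if i ∈ S then α i else 0) • e i) S
      (fun i hi => by simp [hi])
    have h2 : ∑ i ∈ S, (if i ∈ S then α i else 0) • e i = ∑ i ∈ S, α i • e i :=
      Finset.sum_congr rfl fun i hi => by rw [if_pos hi]
    rw [h2] at h1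
    exact h1
  -- Q of a finite-set projection
  have hQfinset : ∀ (S : Finset ℕ) (z : Z), Q (↑S) z = ∑ i ∈ S, co z i • e i := by
    intro S z
    refine tendsto_nhds_unique (hQt (↑S) z) ?_
    have h1 := finTendsto (fun i => ((S : Set ℕ)).indicator (co z) i • e i) S
      (fun i hi => by
        have h : i ∉ (S : Set ℕ) := by simpa using hi
        simp [Set.indicator_of_notMem h])
    have h2 : ∑ i ∈ S, ((S : Set ℕ)).indicator (co z) i • e i = ∑ i ∈ S, co z i • e i :=
      Finset.sum_congr rfl fun i hi => by rw [Set.indicator_of_mem (by simpa using hi)]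
    rw [h2] at h1
    exact h1
  -- Q of a finite linear combination
  have hQfin : ∀ (A : Set ℕ) (S : Finset ℕ) (α : ℕ → ℝ),
      Q A (∑ i ∈ S, α i • e i) = ∑ i ∈ S, (A.indicator α i) • e i := by
    intro A S α
    refine tendsto_nhds_unique (hQt A _) ?_
    have hz : ∀ i, i ∉ S → A.indicator (co (∑ j ∈ S, α j • e j)) i • e i = 0 := by
      intro i hi
      by_cases hiA : i ∈ A
      · rw [Set.indicator_of_mem hiA]
        simp only [hacoef]
        rw [if_neg hi, zero_smul]
      · rw [Set.indicator_of_notMem hiA, zero_smul]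
    have h1 := finTendsto _ S hz
    have h2 : ∑ i ∈ S, A.indicator (co (∑ j ∈ S, α j • e j)) i • e i
        = ∑ i ∈ S, (A.indicator α i) • e i := by
      refine Finset.sum_congr rfl fun i hi => ?_
      by_cases hiA : i ∈ A
      · rw [Set.indicator_of_mem hiA, Set.indicator_of_mem hiA]
        simp only [hacoef]
        rw [if_pos hi]
      · rw [Set.indicator_of_notMem hiA, Set.indicator_of_notMem hiA]
    rw [h2] at h1
    exact h1
  -- linearity of Q
  have hQadd : ∀ (A : Set ℕ) (z w : Z), Q A (z + w) = Q A z + Q A w := by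
    intro A z w
    refine tendsto_nhds_unique (hQt A (z + w)) ?_
    have h := (hQt A z).add (hQt A w)
    refine h.congr fun n => ?_
    rw [← Finset.sum_add_distrib]
    refine Finset.sum_congr rfl fun i _ => ?_
    by_cases h : i ∈ A
    · rw [Set.indicator_of_mem h, Set.indicator_of_mem h, Set.indicator_of_mem h,
        ← add_smul]
      simp only [haadd]
    · rw [Set.indicator_of_notMem h, Set.indicator_of_notMem h,
        Set.indicator_of_notMem h, zero_smul, add_zero]
  have hQsmul : ∀ (A : Set ℕ) (r : ℝ) (z : Z), Q A (r • z) = r • Q A z := by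
    intro A r z
    refine tendsto_nhds_unique (hQt A (r • z)) ?_
    have h := (hQt A z).const_smul r
    refine h.congr fun n => ?_
    rw [Finset.smul_sum]
    refine Finset.sum_congr rfl fun i _ => ?_
    by_cases h : i ∈ A
    · rw [Set.indicator_of_mem h, Set.indicator_of_mem h, smul_smul]
      simp only [hasmul]
    · rw [Set.indicator_of_notMem h, Set.indicator_of_notMem h, zero_smul, smul_zero]
  have hQsub : ∀ (A : Set ℕ) (z w : Z), Q A (z - w) = Q A z - Q A w := by
    intro A z w
    have h1 : z - w = z + (-1 : ℝ) • w := by rw [neg_one_smul]; abel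
    rw [h1, hQadd, hQsmul, neg_one_smul]
    abel
  -- disjointness of blocks
  have hIdisj : ∀ {m n i : ℕ}, i ∈ I m → i ∈ I n → m = n := by
    intro m n i him hin
    by_contra hmn
    rcases Nat.lt_or_ge m n with h | h
    · exact lt_irrefl i (hI m n h i him i hin)
    · exact lt_irrefl i (hI n m (lt_of_le_of_ne h (Ne.symm hmn)) i hin i him)
  have hIne : ∀ n, (I n).Nonempty := by
    intro n
    rw [Finset.nonempty_iff_ne_empty]
    intro h
    exact hyne n (by rw [hyb n, h, Finset.sum_empty])
  have hmin : ∀ n, ∀ i ∈ I n, n ≤ i := by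
    intro n
    induction n with
    | zero => exact fun i _ => Nat.zero_le i
    | succ m ih =>
      intro i hi
      obtain ⟨j, hj⟩ := hIne m
      have h1 : j < i := hI m (m + 1) (Nat.lt_succ_self m) j hj i hi
      have h2 := ih j hj
      omega
  -- Q of a disjoint union of blocks
  have hQUnion : ∀ (F : Finset ℕ) (z : Z),
      Q {i | ∃ n ∈ F, i ∈ I n} z = ∑ n ∈ F, Q (↑(I n)) z := by
    intro F z
    refine tendsto_nhds_unique (hQt _ z) ?_
    have h : Filter.Tendsto
        (fun m => ∑ n ∈ F, ∑ i ∈ Finset.range m, ((I n : Set ℕ)).indicator (co z) i • e i)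
        Filter.atTop (nhds (∑ n ∈ F, Q (↑(I n)) z)) :=
      tendsto_finset_sum
        (f := fun n m => ∑ i ∈ Finset.range m, ((I n : Set ℕ)).indicator (co z) i • e i)
        (a := fun n => Q (↑(I n)) z) F (fun n _ => hQt (↑(I n)) z)
    refine h.congr fun m => ?_
    rw [Finset.sum_comm]
    refine Finset.sum_congr rfl fun i _ => ?_
    rw [← Finset.sum_smul]
    congr 1
    by_cases h : ∃ n ∈ F, i ∈ I n
    · obtain ⟨n0, hn0F, hn0⟩ := h
      rw [Set.indicator_of_mem (Set.mem_setOf.2 ⟨n0, hn0F, hn0⟩)]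
      rw [Finset.sum_eq_single_of_mem n0 hn0F]
      · rw [Set.indicator_of_mem (by simpa using hn0)]
      · intro n hnF hne
        rw [Set.indicator_of_notMem]
        simp only [Finset.mem_coe]
        intro hin
        exact hne (hIdisj hin hn0)
    · rw [Set.indicator_of_notMem (by simpa using h)]
      refine Finset.sum_eq_zero fun n hn => ?_
      rw [Set.indicator_of_notMem]
      simp only [Finset.mem_coe]
      intro hin
      exact h ⟨n, hn, hin⟩
  -- finite sign-flip inequality
  have hsignfin : ∀ (θ : ℕ → ℝ), (∀ n, θ n = 1 ∨ θ n = -1) →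
      ∀ (S : Finset ℕ) (α : ℕ → ℝ),
      ‖∑ i ∈ S, (θ i * α i) • e i‖ ≤ cu * ‖∑ i ∈ S, α i • e i‖ := by
    intro θ hθ S α
    have hten : Filter.Tendsto
        (fun n => ∑ i ∈ Finset.range n, (if i ∈ S then α i else 0) • e i)
        Filter.atTop (nhds (∑ i ∈ S, α i • e i)) := by
      have h1 := finTendsto (fun i => (if i ∈ S then α i else 0) • e i) S
        (fun i hi => by simp [hi])
      have h2 : ∑ i ∈ S, (if i ∈ S then α i else 0) • e i = ∑ i ∈ S, α i • e i :=
        Finset.sum_congr rfl fun i hi => by rw [if_pos hi]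
      rwa [h2] at h1
    obtain ⟨w, hw, hwn⟩ := huncond _ _ θ hθ hten
    have h3 := finTendsto (fun i => (θ i * if i ∈ S then α i else 0) • e i) S
      (fun i hi => by simp [hi])
    have h4 : ∑ i ∈ S, (θ i * if i ∈ S then α i else 0) • e i
        = ∑ i ∈ S, (θ i * α i) • e i :=
      Finset.sum_congr rfl fun i hi => by rw [if_pos hi]
    rw [h4] at h3
    rw [← tendsto_nhds_unique hw h3]
    exact hwn
  -- norming functionals for the block basis
  have hgex : ∀ n, ∃ g : Z →L[ℝ] ℝ, ‖g‖ = 1 ∧ g (y n) = 1 := by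
    intro n
    obtain ⟨g, hg1, hg2⟩ := exists_dual_vector ℝ (y n) (norm_ne_zero_iff.2 (hyne n))
    refine ⟨g, hg1, ?_⟩
    rw [hg2, hynorm n]
    norm_num
  choose g hgnorm hgy using hgex
  have hfle : ∀ (n : ℕ) (z : Z), |g n (Q (↑(I n)) z)| ≤ ‖Q (↑(I n)) z‖ := by
    intro n z
    calc |g n (Q (↑(I n)) z)| = ‖g n (Q (↑(I n)) z)‖ := (Real.norm_eq_abs _).symm
      _ ≤ ‖g n‖ * ‖Q (↑(I n)) z‖ := (g n).le_opNorm _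
      _ = ‖Q (↑(I n)) z‖ := by rw [hgnorm n, one_mul]
  -- the key uniform estimate
  have key : ∀ (z : Z) (F : Finset ℕ),
      ‖∑ n ∈ F, g n (Q (↑(I n)) z) • y n‖
        ≤ c * cu * cd * ‖Q {i | ∃ n ∈ F, i ∈ I n} z‖ := by
    intro z F
    set r : ℕ → ℝ := fun n => ‖Q (↑(I n)) z‖ with hr
    set u : ℕ → Z := fun n => if r n = 0 then y n else (r n)⁻¹ • Q (↑(I n)) z with hu
    have hr0 : ∀ n, (0:ℝ) ≤ r n := fun n => norm_nonneg _
    have hQIn : ∀ n, Q (↑(I n)) z = ∑ i ∈ I n, co z i • e i := fun n => hQfinset (I n) z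
    have hun : ∀ n, ‖u n‖ = 1 := by
      intro n
      simp only [hu]
      by_cases h : r n = 0
      · rw [if_pos h]; exact hynorm n
      · rw [if_neg h, norm_smul, norm_inv, Real.norm_of_nonneg (hr0 n)]
        exact inv_mul_cancel₀ h
    have hub : IsNormalizedBlockBasis e u := by
      refine ⟨fun n h0 => ?_, hun, I, hI, ?_⟩
      · have h1 := hun n
        rw [h0, norm_zero] at h1
        norm_num at h1
      · refine ⟨fun i => if h : ∃ m, i ∈ I m ∧ r m ≠ 0
            then (r h.choose)⁻¹ * co z i else b i, fun n => ?_⟩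
        simp only [hu]
        by_cases h : r n = 0
        · rw [if_pos h, hyb n]
          refine Finset.sum_congr rfl fun i hi => ?_
          have hne : ¬∃ m, i ∈ I m ∧ r m ≠ 0 := by
            rintro ⟨m, him, hm⟩
            exact hm (by rw [hIdisj him hi]; exact h)
          rw [dif_neg hne]
        · rw [if_neg h, hQIn n, Finset.smul_sum]
          refine Finset.sum_congr rfl fun i hi => ?_
          have hex : ∃ m, i ∈ I m ∧ r m ≠ 0 := ⟨n, hi, h⟩
          have heq : hex.choose = n := hIdisj hex.choose_spec.1 hi
          rw [dif_pos hex, smul_smul, heq]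
    have hru : ∀ n, r n • u n = Q (↑(I n)) z := by
      intro n
      simp only [hu]
      by_cases h : r n = 0
      · rw [if_pos h, h, zero_smul]
        exact (norm_eq_zero.1 h).symm
      · rw [if_neg h, smul_smul, mul_inv_cancel₀ h, one_smul]
    set l : ℕ → ℝ := fun n => if r n = 0 then 0 else g n (Q (↑(I n)) z) / r n with hl
    have hl1 : ∀ n, |l n| ≤ 1 := by
      intro n
      simp only [hl]
      by_cases h : r n = 0
      · rw [if_pos h]; norm_num
      · rw [if_neg h, abs_div, abs_of_nonneg (hr0 n)]
        rw [div_le_one (lt_of_le_of_ne (hr0 n) (Ne.symm h))]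
        exact hfle n z
    have hfl : ∀ n, g n (Q (↑(I n)) z) = l n * r n := by
      intro n
      simp only [hl]
      by_cases h : r n = 0
      · rw [if_pos h, zero_mul]
        have h2 : |g n (Q (↑(I n)) z)| ≤ 0 := le_trans (hfle n z) (le_of_eq h)
        exact abs_nonpos_iff.1 h2
      · rw [if_neg h, div_mul_cancel₀ _ h]
    obtain ⟨α, hα⟩ := exists_finsupp (Z := Z) F (fun n => g n (Q (↑(I n)) z))
    obtain ⟨α', hα'⟩ := exists_finsupp (Z := Z) F r
    have step1 : ‖∑ n ∈ F, g n (Q (↑(I n)) z) • y n‖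
        ≤ c * ‖∑ n ∈ F, g n (Q (↑(I n)) z) • e n‖ := by
      rw [← hα y, ← hα e]
      exact (hcequiv α).2
    have step2 : ‖∑ n ∈ F, g n (Q (↑(I n)) z) • e n‖ ≤ cu * ‖∑ n ∈ F, r n • e n‖ := by
      have hsign' : ∀ θ : ℕ → ℝ, (∀ n, θ n = 1 ∨ θ n = -1) →
          ‖(0:Z) + ∑ n ∈ F, θ n • (r n • e n)‖ ≤ cu * ‖∑ n ∈ F, r n • e n‖ := by
        intro θ hθ
        rw [zero_add]
        have h2 : ∑ n ∈ F, θ n • (r n • e n) = ∑ n ∈ F, (θ n * r n) • e n :=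
          Finset.sum_congr rfl fun n _ => smul_smul _ _ _
        rw [h2]
        exact hsignfin θ hθ F r
      have hmb := multiplier_bound (fun n => r n • e n)
        (cu * ‖∑ n ∈ F, r n • e n‖) F 0 hsign' l hl1
      rw [zero_add] at hmb
      have h3 : ∑ n ∈ F, l n • (r n • e n) = ∑ n ∈ F, g n (Q (↑(I n)) z) • e n :=
        Finset.sum_congr rfl fun n _ => by rw [smul_smul, ← hfl n]
      rwa [h3] at hmb
    have step3 : ‖∑ n ∈ F, r n • e n‖ ≤ cd * ‖∑ n ∈ F, r n • u n‖ := by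
      rw [← hα' e, ← hα' u]
      exact hdom u hub α'
    have step4 : ∑ n ∈ F, r n • u n = Q {i | ∃ n ∈ F, i ∈ I n} z := by
      rw [hQUnion]
      exact Finset.sum_congr rfl fun n _ => hru n
    calc ‖∑ n ∈ F, g n (Q (↑(I n)) z) • y n‖
        ≤ c * ‖∑ n ∈ F, g n (Q (↑(I n)) z) • e n‖ := step1
      _ ≤ c * (cu * ‖∑ n ∈ F, r n • e n‖) := mul_le_mul_of_nonneg_left step2 hc0
      _ ≤ c * (cu * (cd * ‖∑ n ∈ F, r n • u n‖)) :=
          mul_le_mul_of_nonneg_left (mul_le_mul_of_nonneg_left step3 hcu0) hc0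
      _ = c * cu * cd * ‖Q {i | ∃ n ∈ F, i ∈ I n} z‖ := by rw [step4]; ring
  -- global bound and tail bound
  have bound2 : ∀ (z : Z) (F : Finset ℕ),
      ‖∑ n ∈ F, g n (Q (↑(I n)) z) • y n‖ ≤ c * cu * cd * k * ‖z‖ := by
    intro z F
    refine (key z F).trans ?_
    calc c * cu * cd * ‖Q {i | ∃ n ∈ F, i ∈ I n} z‖
        ≤ c * cu * cd * (k * ‖z‖) := mul_le_mul_of_nonneg_left (hQn _ z) hccd
      _ = c * cu * cd * k * ‖z‖ := by ring
  have tailbound : ∀ (z : Z) (K : ℕ) (F : Finset ℕ), (∀ n ∈ F, K ≤ n) →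
      ‖∑ n ∈ F, g n (Q (↑(I n)) z) • y n‖
        ≤ c * cu * cd * k * ‖z - ∑ i ∈ Finset.range K, co z i • e i‖ := by
    intro z K F hF
    refine (key z F).trans ?_
    have hA : ∀ i ∈ ({i | ∃ n ∈ F, i ∈ I n} : Set ℕ), K ≤ i := by
      rintro i ⟨n, hnF, hin⟩
      exact le_trans (hF n hnF) (hmin n i hin)
    have h0 : Q {i | ∃ n ∈ F, i ∈ I n} (∑ i ∈ Finset.range K, co z i • e i) = 0 := by
      rw [hQfin]
      refine Finset.sum_eq_zero fun i hi => ?_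
      rw [Finset.mem_range] at hi
      rw [Set.indicator_of_notMem (fun hiA => absurd (hA i hiA) (by omega)), zero_smul]
    have h1 : Q {i | ∃ n ∈ F, i ∈ I n} z
        = Q {i | ∃ n ∈ F, i ∈ I n} (z - ∑ i ∈ Finset.range K, co z i • e i) := by
      rw [hQsub, h0, sub_zero]
    rw [h1]
    calc c * cu * cd
          * ‖Q {i | ∃ n ∈ F, i ∈ I n} (z - ∑ i ∈ Finset.range K, co z i • e i)‖
        ≤ c * cu * cd * (k * ‖z - ∑ i ∈ Finset.range K, co z i • e i‖) :=
          mul_le_mul_of_nonneg_left (hQn _ _) hccd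
      _ = c * cu * cd * k * ‖z - ∑ i ∈ Finset.range K, co z i • e i‖ := by ring
  -- convergence of the series defining the projection
  have hsz : ∀ z : Z, Filter.Tendsto
      (fun K => ‖z - ∑ i ∈ Finset.range K, co z i • e i‖) Filter.atTop (nhds 0) := by
    intro z
    have h := (tendsto_const_nhds (x := z) (f := Filter.atTop)).sub (haten z)
    simpa using h.norm
  have hconv : ∀ z : Z, ∃ w : Z, Filter.Tendsto
      (fun N => ∑ n ∈ Finset.range N, g n (Q (↑(I n)) z) • y n)
      Filter.atTop (nhds w) := by
    intro z
    apply cauchySeq_tendsto_of_complete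
    apply cauchySeq_of_le_tendsto_0
      (b := fun N => c * cu * cd * k * ‖z - ∑ i ∈ Finset.range N, co z i • e i‖)
    · intro n m N hn hm
      rcases le_total n m with h | h
      · rw [dist_eq_norm', ← Finset.sum_Ico_eq_sub _ h]
        exact tailbound z N (Finset.Ico n m)
          (fun j hj => by rw [Finset.mem_Ico] at hj; omega)
      · rw [dist_eq_norm, ← Finset.sum_Ico_eq_sub _ h]
        exact tailbound z N (Finset.Ico m n)
          (fun j hj => by rw [Finset.mem_Ico] at hj; omega)
    · have h := Filter.Tendsto.const_mul (c * cu * cd * k) (hsz z)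
      simpa using h
  choose Pf hPf using hconv
  have hPfadd : ∀ z w : Z, Pf (z + w) = Pf z + Pf w := by
    intro z w
    refine tendsto_nhds_unique (hPf (z + w)) ?_
    have h := (hPf z).add (hPf w)
    refine h.congr fun N => ?_
    rw [← Finset.sum_add_distrib]
    refine Finset.sum_congr rfl fun n _ => ?_
    rw [hQadd, map_add, add_smul]
  have hPfsmul : ∀ (t : ℝ) (z : Z), Pf (t • z) = t • Pf z := by
    intro t z
    refine tendsto_nhds_unique (hPf (t • z)) ?_
    have h := (hPf z).const_smul t
    refine h.congr fun N => ?_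
    rw [Finset.smul_sum]
    refine Finset.sum_congr rfl fun n _ => ?_
    rw [hQsmul, map_smul, smul_smul, smul_eq_mul]
  have hPfbound : ∀ z, ‖Pf z‖ ≤ c * cu * cd * k * ‖z‖ := fun z =>
    le_of_tendsto (hPf z).norm
      (Filter.Eventually.of_forall fun N => bound2 z (Finset.range N))
  let Plin : Z →ₗ[ℝ] Z :=
    { toFun := Pf
      map_add' := hPfadd
      map_smul' := hPfsmul }
  let P : Z →L[ℝ] Z := Plin.mkContinuous (c * cu * cd * k) hPfbound
  have hPapp : ∀ z, P z = Pf z := fun z => rfl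
  have hPy : ∀ m, Pf (y m) = y m := by
    intro m
    refine tendsto_nhds_unique (hPf (y m)) ?_
    have hQy : ∀ n, Q (↑(I n)) (y m) = if n = m then y m else 0 := by
      intro n
      rw [hyb m, hQfin]
      rcases eq_or_ne n m with rfl | h
      · rw [if_pos rfl]
        rw [Finset.sum_congr rfl (fun i hi => by
          rw [Set.indicator_of_mem (by simpa using hi : i ∈ (↑(I n) : Set ℕ))])]
      · rw [if_neg h]
        refine Finset.sum_eq_zero fun i hi => ?_
        rw [Set.indicator_of_notMem (fun hiA =>
          absurd (hIdisj (by simpa using hiA) hi) h), zero_smul]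
    have hconst : ∀ᶠ N in Filter.atTop,
        y m = ∑ n ∈ Finset.range N, g n (Q (↑(I n)) (y m)) • y n := by
      filter_upwards [Filter.eventually_ge_atTop (m + 1)] with N hN
      symm
      rw [Finset.sum_congr rfl (fun n _ => by rw [hQy n])]
      rw [Finset.sum_eq_single_of_mem m (Finset.mem_range.2 (by omega))]
      · rw [if_pos rfl, hgy m, one_smul]
      · intro n _ hne
        rw [if_neg hne, map_zero, zero_smul]
    exact Filter.Tendsto.congr' hconst tendsto_const_nhds
  have hPmem : ∀ z, P z ∈ (Submodule.span ℝ (Set.range y)).topologicalClosure := by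
    intro z
    have hcl := Submodule.isClosed_topologicalClosure (Submodule.span ℝ (Set.range y))
    have h := hcl.mem_of_tendsto (hPf z) (Filter.Eventually.of_forall fun N => ?_)
    · exact h
    · refine Submodule.le_topologicalClosure _ ?_
      refine Submodule.sum_mem _ fun n _ => Submodule.smul_mem _ _ ?_
      exact Submodule.subset_span ⟨n, rfl⟩
  have hPfix : ∀ v, v ∈ (Submodule.span ℝ (Set.range y)).topologicalClosure → P v = v := by
    intro v hv
    have hyN : ∀ m, y m ∈ LinearMap.ker ((P - ContinuousLinearMap.id ℝ Z : Z →L[ℝ] Z) : Z →ₗ[ℝ] Z) := by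
      intro m
      rw [LinearMap.mem_ker]
      have h : P (y m) = y m := hPy m
      simp [ContinuousLinearMap.sub_apply, h]
    have hspan : Submodule.span ℝ (Set.range y)
        ≤ LinearMap.ker ((P - ContinuousLinearMap.id ℝ Z : Z →L[ℝ] Z) : Z →ₗ[ℝ] Z) :=
      Submodule.span_le.2 (by rintro _ ⟨m, rfl⟩; exact hyN m)
    have hclosed : IsClosed ((LinearMap.ker ((P - ContinuousLinearMap.id ℝ Z : Z →L[ℝ] Z) : Z →ₗ[ℝ] Z)) : Set Z) :=
      ContinuousLinearMap.isClosed_ker _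
    have hsubset : ((Submodule.span ℝ (Set.range y)).topologicalClosure : Set Z)
        ⊆ ((LinearMap.ker ((P - ContinuousLinearMap.id ℝ Z : Z →L[ℝ] Z) : Z →ₗ[ℝ] Z)) : Set Z) := by
      rw [Submodule.topologicalClosure_coe]
      exact closure_minimal (fun x hx => hspan hx) hclosed
    have h2 := hsubset hv
    rw [SetLike.mem_coe, LinearMap.mem_ker] at h2
    have h3 : P v - v = 0 := by simpa using h2
    exact sub_eq_zero.1 h3
  refine ⟨P, fun z => hPfix (P z) (hPmem z), ?_⟩
  refine le_antisymm ?_ ?_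
  · rintro v ⟨z, rfl⟩
    exact hPmem z
  · intro v hv
    exact ⟨v, hPfix v hv⟩
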